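/- arXiv:2010.04187 — 3 statements merged into one kernel-verified Lean document; each statement's English description precedes it below -/
import Mathlib

section
/- Given a feasible solution y of a sequential relaxation of an MKP instance, define x_{ij} = (Σ over pieces of item j assigned to knapsack i of their sizes) / w_j. Then x is a feasible solution of the LP relaxation of the MKP (0 ≤ x_{ij}, Σ_i x_{ij} ≤ 1 for each j, Σ_j w_j x_{ij} ≤ c_i for each i) with the same objective value as y. -/
/-- a feasible solution of a sequential relaxation induces, via
`x i j = (total size of pieces of item j in knapsack i) / w j`, a feasible
solution of the LP relaxation of MKP with the same objective value. -/
theorem LP_solution_from_sequential_solution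
    (m n : ℕ) (w p : Fin n → ℝ) (c : Fin m → ℝ)
    (hw : ∀ j, 0 < w j) (hp : ∀ j, 0 ≤ p j)
    (K : Fin n → ℕ) (s : (j : Fin n) → Fin (K j) → ℝ)
    (hs : ∀ j k, 0 < s j k) (hsum : ∀ j, ∑ k, s j k = w j)
    (a : (j : Fin n) → Fin (K j) → Option (Fin m))
    (ha : ∀ i, ∑ j, ∑ k, (if a j k = some i then s j k else 0) ≤ c i)
    (x : Fin m → Fin n → ℝ)
    (hx : ∀ i j, x i j = (∑ k, if a j k = some i then s j k else 0) / w j) :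
    (∀ i j, 0 ≤ x i j) ∧
    (∀ j, ∑ i, x i j ≤ 1) ∧
    (∀ i, ∑ j, w j * x i j ≤ c i) ∧
    (∑ i, ∑ j, p j * x i j
      = ∑ i, ∑ j, ∑ k, (if a j k = some i then (p j / w j) * s j k else 0)) := by
  have hwx : ∀ i j, w j * x i j = ∑ k, if a j k = some i then s j k else 0 := by
    intro i j
    rw [hx, mul_div_cancel₀ _ (hw j).ne']
  have hnn : ∀ i j, (0:ℝ) ≤ ∑ k, if a j k = some i then s j k else 0 := by
    intro i j
    refine Finset.sum_nonneg fun k _ => ?_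
    split <;> [exact (hs j k).le; rfl]
  refine ⟨fun i j => by rw [hx]; exact div_nonneg (hnn i j) (hw j).le, ?_, ?_, ?_⟩
  · intro j
    have : ∑ i, x i j = (∑ i, ∑ k, if a j k = some i then s j k else 0) / w j := by
      rw [Finset.sum_div]; exact Finset.sum_congr rfl fun i _ => hx i j
    rw [this, div_le_one (hw j), Finset.sum_comm, ← hsum j]
    refine Finset.sum_le_sum fun k _ => ?_
    cases h : a j k with
    | none => simp [h]; exact (hs j k).le
    | some i =>
      rw [Finset.sum_eq_single i (fun b _ hb => by simp [h, hb, (Ne.symm hb)])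
        (fun hi => absurd (Finset.mem_univ i) hi)]
      simp [h]
  · intro i
    calc ∑ j, w j * x i j = ∑ j, ∑ k, if a j k = some i then s j k else 0 :=
          Finset.sum_congr rfl fun j _ => hwx i j
      _ ≤ c i := ha i
  · refine Finset.sum_congr rfl fun i _ => Finset.sum_congr rfl fun j _ => ?_
    rw [show p j * x i j = (p j / w j) * (w j * x i j) by
      rw [← mul_assoc, div_mul_cancel₀ _ (hw j).ne'], hwx, Finset.mul_sum]
    exact Finset.sum_congr rfl fun k _ => by split <;> simp
end

section
/- The optimal value of any sequential relaxation of an MKP instance is at most the optimal value of the LP relaxation of the standard MKP formulation: z_seq ≤ z_LPMKP. -/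
/-- the optimal value of any sequential relaxation is at most the
optimal value of the LP relaxation of the standard MKP formulation. -/
theorem zseq_le_zLP
    (m n : ℕ) (w p : Fin n → ℝ) (c : Fin m → ℝ)
    (hw : ∀ j, 0 < w j) (hp : ∀ j, 0 ≤ p j)
    (K : Fin n → ℕ) (s : (j : Fin n) → Fin (K j) → ℝ)
    (hs : ∀ j k, 0 < s j k) (hsum : ∀ j, ∑ k, s j k = w j)
    (zseq zLP : ℝ)
    (hseq : IsGreatest {z : ℝ | ∃ a : (j : Fin n) → Fin (K j) → Option (Fin m),
        (∀ i, ∑ j, ∑ k, (if a j k = some i then s j k else 0) ≤ c i) ∧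
        z = ∑ i, ∑ j, ∑ k, (if a j k = some i then (p j / w j) * s j k else 0)} zseq)
    (hLP : IsGreatest {z : ℝ | ∃ x : Fin m → Fin n → ℝ,
        (∀ i j, 0 ≤ x i j ∧ x i j ≤ 1) ∧
        (∀ i, ∑ j, w j * x i j ≤ c i) ∧
        (∀ j, ∑ i, x i j ≤ 1) ∧
        z = ∑ i, ∑ j, p j * x i j} zLP) :
    zseq ≤ zLP := by
  obtain ⟨a, hcap, hz⟩ := hseq.1
  apply hLP.2
  refine ⟨fun i j => (∑ k, if a j k = some i then s j k else 0) / w j, ?_, ?_, ?_, ?_⟩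
  · intro i j
    constructor
    · apply div_nonneg _ (hw j).le
      refine Finset.sum_nonneg fun k _ => ?_
      split <;> simp [(hs j k).le]
    · rw [div_le_one (hw j)]
      calc (∑ k, if a j k = some i then s j k else 0) ≤ ∑ k, s j k := by
              apply Finset.sum_le_sum
              intro k _
              split <;> simp [(hs j k).le]
        _ = w j := hsum j
  · intro i
    refine le_trans (le_of_eq ?_) (hcap i)
    apply Finset.sum_congr rfl
    intro j _
    simp only []
    rw [mul_div_cancel₀ _ (hw j).ne']
  · intro j
    rw [← Finset.sum_div, div_le_one (hw j), ← hsum j, Finset.sum_comm]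
    apply Finset.sum_le_sum
    intro k _
    rcases h : a j k with _ | i
    · simp [h]
      exact (hs j k).le
    · rw [Finset.sum_eq_single i (fun b _ hb => by
        simp only [h, Option.some.injEq, ite_eq_right_iff]
        exact fun he => absurd he (Ne.symm hb)) (by simp)]
      simp [h]
  · rw [hz]
    apply Finset.sum_congr rfl; intro i _
    apply Finset.sum_congr rfl; intro j _
    simp only [Finset.sum_div, Finset.mul_sum]
    apply Finset.sum_congr rfl; intro k _
    split
    · ring
    · simp
end

section
/- If all weights w_j and capacities c_i are positive integers, then the sequential relaxation obtained by splitting every item j into w_j pieces of size 1 and profit p_j/w_j has optimal value equal to the optimal value of the LP relaxation of the standard MKP formulation. -/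
open Finset
open scoped Classical

lemma mkp_exchange {n : ℕ} (r : Fin n → ℝ) (w : Fin n → ℕ)
    (z : Fin n → ℝ) (h0 : ∀ l, 0 ≤ z l) (h1 : ∀ l, z l ≤ (w l : ℝ))
    {j k : Fin n} (hjk : j ≠ k) (hfj : Int.fract (z j) ≠ 0)
    (hfk : Int.fract (z k) ≠ 0) (hrk : r k ≤ r j) :
    ∃ z' : Fin n → ℝ, (∀ l, 0 ≤ z' l) ∧ (∀ l, z' l ≤ (w l : ℝ)) ∧
      (∑ l, z' l = ∑ l, z l) ∧ (∑ l, r l * z l ≤ ∑ l, r l * z' l) ∧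
      (univ.filter (fun l => Int.fract (z' l) ≠ 0)) ⊂
        (univ.filter (fun l => Int.fract (z l) ≠ 0)) := by
  set δ : ℝ := min ((⌊z j⌋ : ℝ) + 1 - z j) (Int.fract (z k)) with hδ
  have hδ1 : δ ≤ (⌊z j⌋ : ℝ) + 1 - z j := min_le_left _ _
  have hδ2 : δ ≤ Int.fract (z k) := min_le_right _ _
  have hδpos : 0 < δ := by
    apply lt_min
    · linarith [Int.lt_floor_add_one (z j)]
    · exact lt_of_le_of_ne (Int.fract_nonneg _) (Ne.symm hfk)
  have hfloorj : (⌊z j⌋ : ℝ) + 1 ≤ (w j : ℝ) := by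
    have hle : ⌊z j⌋ ≤ (w j : ℤ) := by
      have := Int.floor_le_floor (h1 j)
      rwa [Int.floor_natCast] at this
    have h2 : ⌊z j⌋ < (w j : ℤ) := by
      rcases lt_or_eq_of_le hle with h | h
      · exact h
      · exfalso
        apply hfj
        have hzw : z j = (w j : ℝ) := le_antisymm (h1 j) (by
          calc (w j : ℝ) = ((⌊z j⌋ : ℤ) : ℝ) := by rw [h]; push_cast; ring
          _ ≤ z j := Int.floor_le _)
        rw [hzw]
        exact_mod_cast Int.fract_natCast (w j)
    exact_mod_cast h2
  set z' : Fin n → ℝ :=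
    fun l => z l + δ * ((if l = j then 1 else 0) - (if l = k then 1 else 0)) with hz'
  have hkj : k ≠ j := Ne.symm hjk
  have hzj : z' j = z j + δ := by simp [hz', hjk]
  have hzk : z' k = z k - δ := by simp [hz', hkj]; ring
  have hzo : ∀ l, l ≠ j → l ≠ k → z' l = z l := by
    intro l hl hl2; simp [hz', hl, hl2]
  have key : ∀ f : Fin n → ℝ, ∑ l, f l * z' l = (∑ l, f l * z l) + δ * (f j - f k) := by
    intro f
    have : ∀ l ∈ univ, f l * z' l
        = f l * z l + ((if l = j then δ * f l else 0) - (if l = k then δ * f l else 0)) := by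
      intro l _
      by_cases hl : l = j
      · subst hl; rw [hzj, if_pos rfl, if_neg hjk]; ring
      · by_cases hl2 : l = k
        · subst hl2; rw [hzk, if_neg hl, if_pos rfl]; ring
        · rw [hzo l hl hl2, if_neg hl, if_neg hl2]; ring
    rw [Finset.sum_congr rfl this, Finset.sum_add_distrib, Finset.sum_sub_distrib,
      Finset.sum_ite_eq' univ j, Finset.sum_ite_eq' univ k]
    simp; ring
  have hfloork : (0:ℝ) ≤ (⌊z k⌋ : ℝ) := by exact_mod_cast Int.floor_nonneg.mpr (h0 k)
  refine ⟨z', ?_, ?_, ?_, ?_, ?_⟩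
  · intro l
    by_cases hl : l = j
    · subst hl; rw [hzj]; linarith [h0 l]
    · by_cases hl2 : l = k
      · subst hl2; rw [hzk]
        have := Int.floor_add_fract (z l)
        linarith
      · rw [hzo l hl hl2]; exact h0 l
  · intro l
    by_cases hl : l = j
    · subst hl; rw [hzj]; linarith
    · by_cases hl2 : l = k
      · subst hl2; rw [hzk]; linarith [h1 l]
      · rw [hzo l hl hl2]; exact h1 l
  · have := key (fun _ => 1)
    simp only [one_mul] at this
    rw [this]; ring
  · rw [key r]; nlinarith
  · have hsub : (univ.filter (fun l => Int.fract (z' l) ≠ 0)) ⊆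
        (univ.filter (fun l => Int.fract (z l) ≠ 0)) := by
      intro l hl
      simp only [mem_filter, mem_univ, true_and] at hl ⊢
      by_cases h : l = j
      · subst h; exact hfj
      · by_cases h2 : l = k
        · subst h2; exact hfk
        · rwa [hzo l h h2] at hl
    rw [Finset.ssubset_iff_of_subset hsub]
    rcases min_cases ((⌊z j⌋ : ℝ) + 1 - z j) (Int.fract (z k)) with ⟨he, _⟩ | ⟨he, _⟩
    · refine ⟨j, by simp [hfj], ?_⟩
      simp only [mem_filter, mem_univ, true_and, not_not]
      have hj2 : z' j = ((⌊z j⌋ + 1 : ℤ) : ℝ) := by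
        rw [hzj]; rw [← hδ] at he; push_cast; linarith
      rw [hj2, Int.fract_intCast]
    · refine ⟨k, by simp [hfk], ?_⟩
      simp only [mem_filter, mem_univ, true_and, not_not]
      have hk2 : z' k = ((⌊z k⌋ : ℤ) : ℝ) := by
        rw [hzk]; rw [← hδ] at he
        have := Int.floor_add_fract (z k)
        linarith
      rw [hk2, Int.fract_intCast]

/-- terminal case: at most one fractional coordinate -/
lemma mkp_term {n : ℕ} (r : Fin n → ℝ) (hr : ∀ l, 0 ≤ r l) (w : Fin n → ℕ) (C : ℕ)
    (z : Fin n → ℝ) (h0 : ∀ l, 0 ≤ z l) (h1 : ∀ l, z l ≤ (w l : ℝ))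
    (hs : ∑ l, z l ≤ (C : ℝ))
    (hcard : (univ.filter (fun l => Int.fract (z l) ≠ 0)).card ≤ 1) :
    ∃ y : Fin n → ℕ, (∀ l, y l ≤ w l) ∧ (∑ l, y l ≤ C) ∧
      ∑ l, r l * z l ≤ ∑ l, r l * (y l : ℝ) := by
  have hcast : ∀ l, ((⌈z l⌉.toNat : ℕ) : ℝ) = ((⌈z l⌉ : ℤ) : ℝ) := by
    intro l
    have : (0:ℤ) ≤ ⌈z l⌉ := Int.ceil_nonneg (h0 l)
    exact_mod_cast Int.toNat_of_nonneg this
  refine ⟨fun l => (⌈z l⌉).toNat, ?_, ?_, ?_⟩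
  · intro l
    have h : ⌈z l⌉ ≤ (w l : ℤ) := Int.ceil_le.mpr (by exact_mod_cast h1 l)
    exact_mod_cast Int.toNat_le.mpr h
  · -- sum bound
    have hdiff : ∑ l, ((⌈z l⌉ : ℝ) - z l) < 1 := by
      have hzero : ∀ l ∈ univ, l ∉ univ.filter (fun l => Int.fract (z l) ≠ 0) →
          ((⌈z l⌉ : ℝ) - z l) = 0 := by
        intro l _ hl
        simp only [mem_filter, mem_univ, true_and, not_not] at hl
        have hzl : z l = ((⌊z l⌋ : ℤ) : ℝ) := by
          have := Int.floor_add_fract (z l); rw [hl] at this; linarith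
        rw [hzl, Int.ceil_intCast]; ring
      rw [← Finset.sum_subset (Finset.filter_subset _ _) hzero]
      rcases Finset.eq_empty_or_nonempty (univ.filter (fun l => Int.fract (z l) ≠ 0))
        with h | h
      · rw [h]; simp
      · obtain ⟨j0, hj0⟩ := h
        have hsing : univ.filter (fun l => Int.fract (z l) ≠ 0) = {j0} := by
          apply Finset.eq_singleton_iff_unique_mem.mpr
          exact ⟨hj0, fun x hx => Finset.card_le_one.mp hcard x hx j0 hj0⟩
        rw [hsing, Finset.sum_singleton]
        linarith [Int.ceil_lt_add_one (z j0)]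
    have hsplit : ∑ l, ((⌈z l⌉ : ℝ)) = ∑ l, ((⌈z l⌉ : ℝ) - z l) + ∑ l, z l := by
      rw [← Finset.sum_add_distrib]; apply Finset.sum_congr rfl; intro l _; ring
    have hsum : (↑(∑ l, (⌈z l⌉).toNat) : ℝ) < (C : ℝ) + 1 := by
      push_cast
      rw [Finset.sum_congr rfl (fun l _ => hcast l)]
      linarith
    have hnat : ∑ l, (⌈z l⌉).toNat < C + 1 := by exact_mod_cast hsum
    exact Nat.lt_succ_iff.mp hnat
  · apply Finset.sum_le_sum
    intro l _
    have h2 : z l ≤ ((⌈z l⌉.toNat : ℕ) : ℝ) := by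
      rw [hcast l]; exact Int.le_ceil _
    exact mul_le_mul_of_nonneg_left h2 (hr l)

/-- rounding: any feasible real point dominated by an integer point -/
lemma mkp_round {n : ℕ} (r : Fin n → ℝ) (hr : ∀ l, 0 ≤ r l) (w : Fin n → ℕ) (C : ℕ) :
    ∀ (N : ℕ) (z : Fin n → ℝ), (∀ l, 0 ≤ z l) → (∀ l, z l ≤ (w l : ℝ)) →
      (∑ l, z l ≤ (C : ℝ)) →
      (univ.filter (fun l => Int.fract (z l) ≠ 0)).card ≤ N →
      ∃ y : Fin n → ℕ, (∀ l, y l ≤ w l) ∧ (∑ l, y l ≤ C) ∧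
        ∑ l, r l * z l ≤ ∑ l, r l * (y l : ℝ) := by
  intro N
  induction N with
  | zero => intro z h0 h1 hs hc; exact mkp_term r hr w C z h0 h1 hs (hc.trans (by omega))
  | succ N ih =>
    intro z h0 h1 hs hc
    by_cases h1c : (univ.filter (fun l => Int.fract (z l) ≠ 0)).card ≤ 1
    · exact mkp_term r hr w C z h0 h1 hs h1c
    · have h2 : 1 < (univ.filter (fun l => Int.fract (z l) ≠ 0)).card := by omega
      obtain ⟨j, hj, k, hk, hjk⟩ := Finset.one_lt_card.mp h2
      simp only [mem_filter, mem_univ, true_and] at hj hk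
      have main : ∀ (j k : Fin n), j ≠ k → Int.fract (z j) ≠ 0 → Int.fract (z k) ≠ 0 →
          r k ≤ r j → ∃ y : Fin n → ℕ, (∀ l, y l ≤ w l) ∧ (∑ l, y l ≤ C) ∧
          ∑ l, r l * z l ≤ ∑ l, r l * (y l : ℝ) := by
        intro j k hjk hfj hfk hrk
        obtain ⟨z', h0', h1', hsum', hobj', hss⟩ := mkp_exchange r w z h0 h1 hjk hfj hfk hrk
        have hc' : (univ.filter (fun l => Int.fract (z' l) ≠ 0)).card ≤ N := by
          have := Finset.card_lt_card hss
          omega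
        obtain ⟨y, hyw, hyC, hyobj⟩ := ih z' h0' h1' (hsum' ▸ hs) hc'
        exact ⟨y, hyw, hyC, hobj'.trans hyobj⟩
      rcases le_total (r k) (r j) with h | h
      · exact main j k hjk hj hk h
      · exact main k j (Ne.symm hjk) hk hj h

lemma mkp_assign (m n : ℕ) (w : Fin n → ℕ) (c : Fin m → ℕ) (y : Fin n → ℕ)
    (r : Fin n → ℝ) (hyw : ∀ j, y j ≤ w j) (hsum : ∑ j, y j ≤ ∑ i, c i) :
    ∃ a : (j : Fin n) → Fin (w j) → Option (Fin m),
      (∀ i, ∑ j, ∑ k : Fin (w j), (if a j k = some i then (1:ℝ) else 0) ≤ (c i : ℝ)) ∧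
      (∑ i, ∑ j, ∑ k : Fin (w j), (if a j k = some i then r j else 0)
        = ∑ j, (y j : ℝ) * r j) := by
  have hcard : Fintype.card (Σ j : Fin n, Fin (y j)) ≤ Fintype.card (Σ i : Fin m, Fin (c i)) := by
    simpa using hsum
  obtain ⟨f⟩ : Nonempty ((Σ j : Fin n, Fin (y j)) ↪ (Σ i : Fin m, Fin (c i))) :=
    Function.Embedding.nonempty_of_card_le hcard
  set A : (j : Fin n) → ℕ → Option (Fin m) :=
    fun j t => if h : t < y j then some ((f ⟨j, ⟨t, h⟩⟩).fst) else none with hA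
  have hswap : ∀ (j : Fin n) (i : Fin m) (g : ℝ),
      (∑ k : Fin (w j), if A j k.val = some i then g else 0)
        = ∑ k : Fin (y j), if (f ⟨j, k⟩).fst = i then g else 0 := by
    intro j i g
    rw [Fin.sum_univ_eq_sum_range (fun t => if A j t = some i then g else 0) (w j)]
    have hvanish : ∀ t ∈ Finset.range (w j), t ∉ Finset.range (y j) →
        (if A j t = some i then g else 0) = 0 := by
      intro t _ ht
      have : ¬ t < y j := by simpa using ht
      rw [hA]
      simp [this]
    rw [← Finset.sum_subset (Finset.range_subset_range.mpr (hyw j)) hvanish,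
      ← Fin.sum_univ_eq_sum_range (fun t => if A j t = some i then g else 0) (y j)]
    apply Finset.sum_congr rfl
    intro k _
    have hk : (k : ℕ) < y j := k.isLt
    rw [hA]
    simp only [hk, dif_pos, Fin.eta, Option.some_inj]
  refine ⟨fun j k => A j k.val, ?_, ?_⟩
  · intro i
    have h1 : (∑ j, ∑ k : Fin (w j), if A j k.val = some i then (1:ℝ) else 0)
        = ∑ s : Σ j : Fin n, Fin (y j), if (f s).fst = i then (1:ℝ) else 0 := by
      rw [← Finset.univ_sigma_univ, Finset.sum_sigma]
      exact Finset.sum_congr rfl fun j _ => hswap j i 1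
    rw [h1, Finset.sum_boole]
    have hle : (univ.filter (fun s : Σ j : Fin n, Fin (y j) => (f s).fst = i)).card
        ≤ (univ.filter (fun t : Σ i' : Fin m, Fin (c i') => t.fst = i)).card := by
      apply Finset.card_le_card_of_injOn f
      · intro s hs
        simp only [coe_filter, mem_filter, mem_univ, true_and, Set.mem_setOf_eq] at hs ⊢
        exact hs
      · exact f.injective.injOn
    have htarget : (univ.filter (fun t : Σ i' : Fin m, Fin (c i') => t.fst = i)).card = c i := by
      rw [Finset.card_filter, ← Finset.univ_sigma_univ, Finset.sum_sigma]
      have hinner : ∀ i' ∈ (univ : Finset (Fin m)),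
          (∑ k : Fin (c i'), if (⟨i', k⟩ : Σ i' : Fin m, Fin (c i')).fst = i then 1 else 0)
            = if i' = i then c i' else 0 := by
        intro i' _
        by_cases h : i' = i <;> simp [h]
      rw [Finset.sum_congr rfl hinner, Finset.sum_ite_eq' univ i]
      simp
    rw [htarget] at hle
    exact_mod_cast hle
  · have h1 : (∑ i, ∑ j, ∑ k : Fin (w j), if A j k.val = some i then r j else 0)
        = ∑ i, ∑ j, ∑ k : Fin (y j), if (f ⟨j, k⟩).fst = i then r j else 0 :=
      Finset.sum_congr rfl fun i _ => Finset.sum_congr rfl fun j _ => hswap j i (r j)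
    rw [h1, Finset.sum_comm]
    apply Finset.sum_congr rfl
    intro j _
    rw [Finset.sum_comm]
    have h2 : ∀ k : Fin (y j), (∑ i, if (f ⟨j, k⟩).fst = i then r j else 0) = r j := by
      intro k
      rw [Finset.sum_ite_eq]
      simp
    rw [Finset.sum_congr rfl fun k _ => h2 k]
    simp [Finset.sum_const, mul_comm]

/-- with integer weights and capacities, the sequential relaxation
obtained by splitting every item `j` into `w j` unit-size pieces of profit
`p j / w j` has optimal value equal to the LP relaxation optimum. -/
theorem unit_sequential_eq_LP
    (m n : ℕ) (w : Fin n → ℕ) (hw : ∀ j, 1 ≤ w j)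
    (p : Fin n → ℝ) (hp : ∀ j, 0 ≤ p j) (c : Fin m → ℕ)
    (zseq zLP : ℝ)
    (hseq : IsGreatest {z : ℝ | ∃ a : (j : Fin n) → Fin (w j) → Option (Fin m),
        (∀ i, ∑ j, ∑ k : Fin (w j), (if a j k = some i then (1 : ℝ) else 0) ≤ (c i : ℝ)) ∧
        z = ∑ i, ∑ j, ∑ k : Fin (w j),
              (if a j k = some i then p j / (w j : ℝ) else 0)} zseq)
    (hLP : IsGreatest {z : ℝ | ∃ x : Fin m → Fin n → ℝ,
        (∀ i j, 0 ≤ x i j) ∧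
        (∀ i, ∑ j, (w j : ℝ) * x i j ≤ (c i : ℝ)) ∧
        (∀ j, ∑ i, x i j ≤ 1) ∧
        z = ∑ i, ∑ j, p j * x i j} zLP) :
    zseq = zLP := by
  have wpos : ∀ j, (0:ℝ) < (w j : ℝ) := fun j => by exact_mod_cast hw j
  have wne : ∀ j, (w j : ℝ) ≠ 0 := fun j => ne_of_gt (wpos j)
  apply le_antisymm
  · -- zseq ≤ zLP
    obtain ⟨a, hcap, hzval⟩ := hseq.1
    apply hLP.2
    refine ⟨fun i j => (∑ k : Fin (w j), if a j k = some i then (1:ℝ) else 0) / (w j : ℝ),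
      ?_, ?_, ?_, ?_⟩
    · intro i j
      apply div_nonneg _ (le_of_lt (wpos j))
      apply Finset.sum_nonneg
      intro k _
      split <;> norm_num
    · intro i
      have : ∀ j ∈ univ, (w j : ℝ) *
          ((∑ k : Fin (w j), if a j k = some i then (1:ℝ) else 0) / (w j : ℝ))
          = ∑ k : Fin (w j), if a j k = some i then (1:ℝ) else 0 := by
        intro j _
        rw [mul_comm, div_mul_cancel₀ _ (wne j)]
      rw [Finset.sum_congr rfl this]
      exact hcap i
    · intro j
      rw [← Finset.sum_div]
      rw [div_le_one (wpos j)]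
      have hin : ∀ k : Fin (w j), (∑ i, if a j k = some i then (1:ℝ) else 0) ≤ 1 := by
        intro k
        cases h : a j k with
        | none => simp [h]
        | some i0 => simp [h, Finset.sum_ite_eq']
      calc (∑ i, ∑ k : Fin (w j), if a j k = some i then (1:ℝ) else 0)
          = ∑ k : Fin (w j), ∑ i, if a j k = some i then (1:ℝ) else 0 := Finset.sum_comm
        _ ≤ ∑ k : Fin (w j), 1 := Finset.sum_le_sum (fun k _ => hin k)
        _ = (w j : ℝ) := by simp
    · show zseq = ∑ i, ∑ j, p j *
        ((∑ k : Fin (w j), if a j k = some i then (1:ℝ) else 0) / (w j : ℝ))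
      rw [hzval]
      apply Finset.sum_congr rfl
      intro i _
      apply Finset.sum_congr rfl
      intro j _
      rw [mul_div_assoc', Finset.mul_sum, Finset.sum_div]
      apply Finset.sum_congr rfl
      intro k _
      split <;> simp
  · -- zLP ≤ zseq
    obtain ⟨x, hx0, hxc, hx1, hzLP⟩ := hLP.1
    set r : Fin n → ℝ := fun j => p j / (w j : ℝ) with hrdef
    have hr : ∀ j, 0 ≤ r j := fun j => div_nonneg (hp j) (le_of_lt (wpos j))
    set z : Fin n → ℝ := fun j => (w j : ℝ) * ∑ i, x i j with hzdef
    have h0 : ∀ j, 0 ≤ z j := fun j =>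
      mul_nonneg (le_of_lt (wpos j)) (Finset.sum_nonneg fun i _ => hx0 i j)
    have h1 : ∀ j, z j ≤ (w j : ℝ) := by
      intro j
      have := mul_le_mul_of_nonneg_left (hx1 j) (le_of_lt (wpos j))
      simpa using this
    have hs : ∑ j, z j ≤ ((∑ i, c i : ℕ) : ℝ) := by
      push_cast
      calc ∑ j, (w j : ℝ) * ∑ i, x i j = ∑ j, ∑ i, (w j : ℝ) * x i j := by
            apply Finset.sum_congr rfl; intro j _; rw [Finset.mul_sum]
        _ = ∑ i, ∑ j, (w j : ℝ) * x i j := Finset.sum_comm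
        _ ≤ ∑ i, (c i : ℝ) := Finset.sum_le_sum (fun i _ => hxc i)
    obtain ⟨y, hyw, hyC, hyobj⟩ := mkp_round r hr w (∑ i, c i)
      ((univ.filter (fun l => Int.fract (z l) ≠ 0)).card) z h0 h1 hs le_rfl
    obtain ⟨a, hacap, haval⟩ := mkp_assign m n w c y r hyw hyC
    have hmem : (∑ j, (y j : ℝ) * r j) ∈ {z : ℝ | ∃ a : (j : Fin n) → Fin (w j) → Option (Fin m),
        (∀ i, ∑ j, ∑ k : Fin (w j), (if a j k = some i then (1 : ℝ) else 0) ≤ (c i : ℝ)) ∧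
        z = ∑ i, ∑ j, ∑ k : Fin (w j),
              (if a j k = some i then p j / (w j : ℝ) else 0)} := by
      exact ⟨a, hacap, haval.symm⟩
    have hle := hseq.2 hmem
    have hzLP2 : zLP = ∑ j, r j * z j := by
      rw [hzLP, Finset.sum_comm]
      apply Finset.sum_congr rfl
      intro j _
      have hrz : r j * z j = p j * ∑ i, x i j := by
        show (p j / (w j : ℝ)) * ((w j : ℝ) * ∑ i, x i j) = p j * ∑ i, x i j
        rw [div_mul_eq_mul_div, mul_left_comm]
        exact mul_div_cancel_left₀ _ (wne j)
      rw [hrz, Finset.mul_sum]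
    have : ∑ j, r j * (y j : ℝ) = ∑ j, (y j : ℝ) * r j := by
      apply Finset.sum_congr rfl; intro j _; ring
    rw [hzLP2]
    calc ∑ j, r j * z j ≤ ∑ j, r j * (y j : ℝ) := hyobj
      _ = ∑ j, (y j : ℝ) * r j := this
      _ ≤ zseq := hle
end
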